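/- For every integer p ≥ 1 and every point x of the torus ℝ²/ℤ², the indicator functions satisfy the Möbius inversion identity 𝟙_{O_{1/p}}(x) = Σ_{d ∣ p, d ≥ 1} μ(p/d) · 𝟙_{L_{1/d}}(x), where μ is the Möbius function; i.e., the indicator of the SL(2,ℤ)-orbit O_{1/p} is the Möbius-weighted alternating sum of the indicators of the torsion subgroups L_{1/d} over divisors d of p. -/

import Mathlib

/-- The integer lattice `ℤ² ⊂ ℝ²`, as an additive subgroup of `Fin 2 → ℝ`. -/
def intLattice : AddSubgroup (Fin 2 → ℝ) where
  carrier := {v | ∀ i, ∃ n : ℤ, v i = (n : ℝ)}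
  zero_mem' := fun i => ⟨0, by simp⟩
  add_mem' := by
    intro a b ha hb i
    obtain ⟨n, hn⟩ := ha i
    obtain ⟨m, hm⟩ := hb i
    exact ⟨n + m, by simp [hn, hm]⟩
  neg_mem' := by
    intro a ha i
    obtain ⟨n, hn⟩ := ha i
    exact ⟨-n, by simp [hn]⟩

/-- The torus `ℝ²/ℤ²`. -/
abbrev Torus : Type := (Fin 2 → ℝ) ⧸ intLattice

/-- The natural action of `SL(2,ℤ)` on `ℝ²` by matrix multiplication on column vectors. -/
noncomputable def sl2zAct (A : Matrix.SpecialLinearGroup (Fin 2) ℤ) (v : Fin 2 → ℝ) :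
    Fin 2 → ℝ :=
  ((A : Matrix (Fin 2) (Fin 2) ℤ).map fun n => (n : ℝ)).mulVec v

/-- The `SL(2,ℤ)`-orbit of the torus point represented by `v ∈ ℝ²`. -/
def torusOrbit (v : Fin 2 → ℝ) : Set Torus :=
  {x | ∃ A : Matrix.SpecialLinearGroup (Fin 2) ℤ,
    (QuotientAddGroup.mk (sl2zAct A v) : Torus) = x}

/-- The `d`-torsion subgroup `L_{1/d} = {(a/d, c/d) mod ℤ²}` of the torus, as a set. -/
def torsionSet (d : ℕ) : Set Torus :=
  {x | ∃ a c : ℤ, (QuotientAddGroup.mk ![(a : ℝ) / d, (c : ℝ) / d] : Torus) = x}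
open Finset ArithmeticFunction in
lemma torus_mk_eq_mk {v w : Fin 2 → ℝ} :
    (QuotientAddGroup.mk v : Torus) = QuotientAddGroup.mk w ↔ ∀ i, ∃ n : ℤ, w i - v i = n := by
  rw [QuotientAddGroup.eq]
  constructor
  · intro h i
    obtain ⟨n, hn⟩ := h i
    exact ⟨n, by simpa [sub_eq_neg_add] using hn⟩
  · intro h i
    obtain ⟨n, hn⟩ := h i
    exact ⟨n, by simpa [sub_eq_neg_add] using hn⟩

lemma nsmul_mk_eq_zero {v : Fin 2 → ℝ} {n : ℕ} :
    (n • (QuotientAddGroup.mk v : Torus) = 0) ↔ ∀ i, ∃ m : ℤ, (n : ℝ) * v i = m := by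
  rw [← QuotientAddGroup.mk_nsmul, QuotientAddGroup.eq_zero_iff]
  constructor
  · intro h i
    obtain ⟨m, hm⟩ := h i
    exact ⟨m, by simpa [nsmul_eq_mul] using hm⟩
  · intro h i
    obtain ⟨m, hm⟩ := h i
    exact ⟨m, by simpa [nsmul_eq_mul] using hm⟩
lemma mk_frac_nsmul {a c : ℤ} {p : ℕ} (hp : 0 < p) (n : ℕ) :
    (n • (QuotientAddGroup.mk ![(a : ℝ)/p, (c : ℝ)/p] : Torus) = 0) ↔
      (p : ℤ) ∣ n * a ∧ (p : ℤ) ∣ n * c := by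
  have hp0 : (p : ℝ) ≠ 0 := Nat.cast_ne_zero.mpr hp.ne'
  rw [nsmul_mk_eq_zero]
  constructor
  · intro h
    obtain ⟨m0, h0⟩ := h 0
    obtain ⟨m1, h1⟩ := h 1
    simp only [Matrix.cons_val_zero, Matrix.cons_val_one, Matrix.head_cons] at h0 h1
    constructor
    · refine Dvd.intro m0 ?_
      have : (n : ℝ) * a = p * m0 := by field_simp at h0; linarith
      exact_mod_cast this.symm
    · refine Dvd.intro m1 ?_
      have : (n : ℝ) * c = p * m1 := by field_simp at h1; linarith
      exact_mod_cast this.symm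
  · rintro ⟨⟨m0, h0⟩, ⟨m1, h1⟩⟩ i
    fin_cases i
    · refine ⟨m0, ?_⟩
      have h0' : ((n : ℤ) * a : ℝ) = ((p : ℤ) * m0 : ℝ) := by exact_mod_cast congrArg (fun z : ℤ => (z : ℝ)) h0
      push_cast at h0'
      simp only [Fin.zero_eta, Matrix.cons_val_zero]
      field_simp
      linarith
    · refine ⟨m1, ?_⟩
      have h1' : ((n : ℤ) * c : ℝ) = ((p : ℤ) * m1 : ℝ) := by exact_mod_cast congrArg (fun z : ℤ => (z : ℝ)) h1
      push_cast at h1'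
      simp only [Fin.mk_one, Matrix.cons_val_one, Matrix.head_cons, Matrix.cons_val_zero]
      field_simp
      linarith
lemma bezout_three {a c : ℤ} {p : ℕ} (h1 : Int.gcd (Int.gcd a c : ℤ) (p : ℤ) = 1) :
    ∃ u v w : ℤ, a * u + c * v + p * w = 1 := by
  have hco : IsCoprime ((Int.gcd a c : ℤ)) (p : ℤ) := Int.isCoprime_iff_gcd_eq_one.mpr h1
  obtain ⟨s, t, hst⟩ := hco
  have hg : (Int.gcd a c : ℤ) = a * Int.gcdA a c + c * Int.gcdB a c := Int.gcd_eq_gcd_ab a c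
  exact ⟨Int.gcdA a c * s, Int.gcdB a c * s, t, by rw [← hst, hg]; ring⟩

lemma addOrderOf_frac {a c : ℤ} {p : ℕ} (hp : 0 < p)
    (h1 : Int.gcd (Int.gcd a c : ℤ) (p : ℤ) = 1) :
    addOrderOf (QuotientAddGroup.mk ![(a : ℝ)/p, (c : ℝ)/p] : Torus) = p := by
  set y : Torus := QuotientAddGroup.mk ![(a : ℝ)/p, (c : ℝ)/p] with hy
  have hdvd : addOrderOf y ∣ p := by
    rw [addOrderOf_dvd_iff_nsmul_eq_zero, hy, mk_frac_nsmul hp]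
    exact ⟨Dvd.intro a rfl, Dvd.intro c rfl⟩
  have h2 : p ∣ addOrderOf y := by
    set n := addOrderOf y with hn
    have h0 : n • y = 0 := addOrderOf_nsmul_eq_zero y
    rw [hy, mk_frac_nsmul hp] at h0
    obtain ⟨u, v, w, huvw⟩ := bezout_three h1
    have : (p : ℤ) ∣ (n : ℤ) := by
      have : (n : ℤ) = (n * a) * u + (n * c) * v + (p : ℤ) * (n * w) := by
        have := congrArg (fun z => (n : ℤ) * z) huvw
        simp at this
        linarith [this]
      rw [this]
      exact dvd_add (dvd_add (h0.1.mul_right u) (h0.2.mul_right v)) (Dvd.intro _ rfl)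
    exact_mod_cast this
  exact Nat.dvd_antisymm hdvd h2
lemma gcd_eq_one_of_addOrderOf_eq {a c : ℤ} {p : ℕ} (hp : 0 < p)
    (h : addOrderOf (QuotientAddGroup.mk ![(a : ℝ)/p, (c : ℝ)/p] : Torus) = p) :
    Int.gcd (Int.gcd a c : ℤ) (p : ℤ) = 1 := by
  set g : ℕ := Int.gcd (Int.gcd a c : ℤ) (p : ℤ) with hg
  have hgp : g ∣ p := by
    have : (g:ℤ) ∣ (p:ℤ) := Int.gcd_dvd_right _ _
    exact_mod_cast this
  have hga : (g : ℤ) ∣ a := (Int.gcd_dvd_left _ _).trans (Int.gcd_dvd_left _ _)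
  have hgc : (g : ℤ) ∣ c := (Int.gcd_dvd_left _ _).trans (Int.gcd_dvd_right _ _)
  have hpg : ((p / g : ℕ) : ℤ) * (g : ℤ) = (p : ℤ) := by exact_mod_cast Nat.div_mul_cancel hgp
  have hkill : (p / g) • (QuotientAddGroup.mk ![(a : ℝ)/p, (c : ℝ)/p] : Torus) = 0 := by
    rw [mk_frac_nsmul hp]
    obtain ⟨a', ha'⟩ := hga
    obtain ⟨c', hc'⟩ := hgc
    constructor
    · exact ⟨a', by rw [ha', ← hpg]; ring⟩
    · exact ⟨c', by rw [hc', ← hpg]; ring⟩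
  rw [← addOrderOf_dvd_iff_nsmul_eq_zero, h] at hkill
  have hdg : p / g = p := Nat.dvd_antisymm (Nat.div_dvd_of_dvd hgp) hkill
  have : p * g = p * 1 := by
    rw [mul_one]
    conv_rhs => rw [← Nat.div_mul_cancel hgp, hdg]
  exact Nat.eq_of_mul_eq_mul_left hp this

lemma torsion_rep {x : Torus} {d : ℕ} (hd : 0 < d) (h : d • x = 0) :
    ∃ a c : ℤ, x = QuotientAddGroup.mk ![(a : ℝ)/d, (c : ℝ)/d] := by
  have hd0 : (d : ℝ) ≠ 0 := Nat.cast_ne_zero.mpr hd.ne'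
  obtain ⟨v, rfl⟩ := QuotientAddGroup.mk_surjective x
  rw [nsmul_mk_eq_zero] at h
  obtain ⟨m0, h0⟩ := h 0
  obtain ⟨m1, h1⟩ := h 1
  refine ⟨m0, m1, ?_⟩
  rw [torus_mk_eq_mk]
  intro i
  fin_cases i
  · exact ⟨0, by push_cast; field_simp; linarith⟩
  · exact ⟨0, by push_cast; field_simp; linarith⟩

lemma mem_torsionSet_iff {x : Torus} {d : ℕ} (hd : 0 < d) :
    x ∈ torsionSet d ↔ addOrderOf x ∣ d := by
  rw [addOrderOf_dvd_iff_nsmul_eq_zero]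
  constructor
  · rintro ⟨a, c, rfl⟩
    rw [mk_frac_nsmul hd]
    exact ⟨Dvd.intro a rfl, Dvd.intro c rfl⟩
  · intro h
    obtain ⟨a, c, rfl⟩ := torsion_rep hd h
    exact ⟨a, c, rfl⟩
lemma lift_coprime {a c : ℤ} {p : ℕ} (hp : 0 < p)
    (h1 : Int.gcd (Int.gcd a c : ℤ) (p : ℤ) = 1) :
    ∃ a' c' : ℤ, (p : ℤ) ∣ a' - a ∧ (p : ℤ) ∣ c' - c ∧ IsCoprime a' c' := by
  by_cases ha : a = 0
  · subst ha
    have hcp : Nat.gcd c.natAbs p = 1 := by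
      have : Int.gcd (Int.gcd 0 c : ℤ) (p : ℤ) = Nat.gcd c.natAbs p := by
        rw [Int.gcd_natCast_natCast]
        simp [Int.gcd]
      rwa [this] at h1
    refine ⟨p, c, ⟨1, by ring⟩, ⟨0, by ring⟩, ?_⟩
    rw [Int.isCoprime_iff_gcd_eq_one]
    rw [Int.gcd]
    simpa [Nat.gcd_comm] using hcp
  · set k : ℕ := ∏ q ∈ a.natAbs.primeFactors.filter (fun q => ¬ q ∣ c.natAbs), q with hk
    refine ⟨a, c + p * k, ⟨0, by ring⟩, ⟨k, by ring⟩, ?_⟩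
    rw [Int.isCoprime_iff_gcd_eq_one]
    by_contra hg
    obtain ⟨q, hq, hqd⟩ := Nat.exists_prime_and_dvd hg
    have hqa : q ∣ a.natAbs := (Nat.dvd_gcd_iff.mp hqd).1
    have hqc' : q ∣ (c + p * k).natAbs := (Nat.dvd_gcd_iff.mp hqd).2
    have hqaZ : (q : ℤ) ∣ a := Int.natCast_dvd.mpr hqa
    have hqc'Z : (q : ℤ) ∣ c + p * k := Int.natCast_dvd.mpr hqc'
    by_cases hqc : (q : ℤ) ∣ c
    · have hqpk : (q : ℤ) ∣ (p : ℤ) * k := by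
        have := dvd_sub hqc'Z hqc
        simpa using this
      have hqpkN : q ∣ p * k := by
        rw [← Int.natCast_dvd_natCast]
        simpa using hqpk
      rcases (Nat.Prime.dvd_mul hq).mp hqpkN with hqp | hqk
      · have h2 : q ∣ Int.gcd a c := Nat.dvd_gcd hqa (Int.natCast_dvd.mp hqc)
        have h3 : q ∣ Int.gcd (Int.gcd a c : ℤ) (p : ℤ) := by
          rw [Int.gcd_natCast_natCast]
          exact Nat.dvd_gcd h2 hqp
        rw [h1] at h3
        exact hq.one_lt.ne' (Nat.eq_one_of_dvd_one h3)
      · obtain ⟨r, hr, hqr⟩ := hq.prime.exists_mem_finset_dvd hqk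
        have := (Finset.mem_filter.mp hr)
        have hrprime : r.Prime := Nat.prime_of_mem_primeFactors this.1
        have : q = r := (Nat.prime_dvd_prime_iff_eq hq hrprime).mp hqr
        exact (Finset.mem_filter.mp hr).2 (this ▸ Int.natCast_dvd.mp hqc)
    · have hqmem : q ∈ a.natAbs.primeFactors.filter (fun q => ¬ q ∣ c.natAbs) := by
        refine Finset.mem_filter.mpr ⟨Nat.mem_primeFactors.mpr ⟨hq, hqa, by simpa using ha⟩, ?_⟩
        intro hdvd
        exact hqc (Int.natCast_dvd.mpr hdvd)
      have hqk : (q : ℤ) ∣ (p : ℤ) * k := by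
        have : q ∣ k := Finset.dvd_prod_of_mem _ hqmem
        exact Dvd.dvd.mul_left (Int.natCast_dvd_natCast.mpr this) _
      have : (q : ℤ) ∣ c := by
        have := dvd_sub hqc'Z hqk
        simpa using this
      exact hqc this
lemma sl2zAct_apply (A : Matrix.SpecialLinearGroup (Fin 2) ℤ) (p : ℕ) :
    sl2zAct A ![0, 1 / (p : ℝ)] =
      ![((A : Matrix (Fin 2) (Fin 2) ℤ) 0 1 : ℝ) / p,
        ((A : Matrix (Fin 2) (Fin 2) ℤ) 1 1 : ℝ) / p] := by
  funext i
  fin_cases i <;>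
    simp [sl2zAct, Matrix.mulVec, dotProduct, Fin.sum_univ_two, Matrix.map_apply,
      div_eq_mul_inv, one_div]

lemma mem_orbit_iff {p : ℕ} (hp : 0 < p) (x : Torus) :
    x ∈ torusOrbit ![0, 1 / (p : ℝ)] ↔ addOrderOf x = p := by
  constructor
  · rintro ⟨A, rfl⟩
    rw [sl2zAct_apply]
    set b := (A : Matrix (Fin 2) (Fin 2) ℤ) 0 1
    set d := (A : Matrix (Fin 2) (Fin 2) ℤ) 1 1
    have hco : IsCoprime b d := by
      refine ⟨-((A : Matrix (Fin 2) (Fin 2) ℤ) 1 0), (A : Matrix (Fin 2) (Fin 2) ℤ) 0 0, ?_⟩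
      have hdet : (A : Matrix (Fin 2) (Fin 2) ℤ).det = 1 := A.2
      rw [Matrix.det_fin_two] at hdet
      linarith [hdet]
    apply addOrderOf_frac hp
    rw [Int.isCoprime_iff_gcd_eq_one.mp hco]
    simp [Int.gcd]
  · intro h
    have hkill : p • x = 0 := by
      rw [← h]; exact addOrderOf_nsmul_eq_zero x
    obtain ⟨a, c, rfl⟩ := torsion_rep hp hkill
    have hgcd := gcd_eq_one_of_addOrderOf_eq hp h
    obtain ⟨a', c', haa, hcc, hco⟩ := lift_coprime hp hgcd
    obtain ⟨A, hA0, hA1⟩ := hco.exists_SL2_col 1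
    refine ⟨A, ?_⟩
    rw [sl2zAct_apply, hA0, hA1, torus_mk_eq_mk]
    have hp0 : (p : ℝ) ≠ 0 := Nat.cast_ne_zero.mpr hp.ne'
    obtain ⟨m, hm⟩ := haa
    obtain ⟨n, hn⟩ := hcc
    intro i
    fin_cases i
    · refine ⟨-m, ?_⟩
      have : (a : ℝ) - a' = -(m : ℝ) * p := by
        have hZ : a - a' = -((p : ℤ) * m) := by linarith [hm]
        have hR := congrArg (fun z : ℤ => (z : ℝ)) hZ
        push_cast at hR
        linarith
      simp only [Matrix.cons_val_zero]
      push_cast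
      field_simp
      linarith
    · refine ⟨-n, ?_⟩
      have : (c : ℝ) - c' = -(n : ℝ) * p := by
        have hZ : c - c' = -((p : ℤ) * n) := by linarith [hn]
        have hR := congrArg (fun z : ℤ => (z : ℝ)) hZ
        push_cast at hR
        linarith
      simp only [Matrix.cons_val_one, Matrix.head_cons]
      push_cast
      field_simp
      linarith
open ArithmeticFunction in
lemma sum_moebius_divisors (m : ℕ) :
    (∑ d ∈ m.divisors, (moebius d : ℤ)) = if m = 1 then 1 else 0 := by
  have h := congrArg (fun f : ArithmeticFunction ℤ => f m) moebius_mul_coe_zeta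
  simp only [coe_mul_zeta_apply, one_apply] at h
  exact h

open ArithmeticFunction in
lemma moebius_sum_aux (p e : ℕ) (hp : 0 < p) :
    (∑ d ∈ p.divisors, (moebius (p / d) : ℤ) * (if e ∣ d then 1 else 0))
      = if e = p then 1 else 0 := by
  by_cases hep : e ∣ p
  · have he : 0 < e := Nat.pos_of_dvd_of_pos hep hp
    have step1 : (∑ d ∈ p.divisors, (moebius (p / d) : ℤ) * (if e ∣ d then 1 else 0))
        = ∑ d ∈ p.divisors, (moebius (p / d) : ℤ) * (if e ∣ p / (p / d) then 1 else 0) :=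
      Finset.sum_congr rfl fun d hd => by
        rw [Nat.div_div_self (Nat.dvd_of_mem_divisors hd) hp.ne']
    have step2 : (∑ d ∈ p.divisors, (moebius (p / d) : ℤ) * (if e ∣ p / (p / d) then 1 else 0))
        = ∑ d ∈ p.divisors, (moebius d : ℤ) * (if e ∣ p / d then 1 else 0) :=
      Nat.sum_div_divisors p (fun d => (moebius d : ℤ) * (if e ∣ p / d then 1 else 0))
    have step3 : (∑ d ∈ p.divisors, (moebius d : ℤ) * (if e ∣ p / d then 1 else 0))
        = ∑ d ∈ p.divisors, (moebius d : ℤ) * (if d ∣ p / e then 1 else 0) :=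
      Finset.sum_congr rfl fun d hd => by
        have hdp : d ∣ p := Nat.dvd_of_mem_divisors hd
        have h1 : e ∣ p / d ↔ d * e ∣ p := Nat.dvd_div_iff_mul_dvd hdp
        have h2 : d ∣ p / e ↔ e * d ∣ p := Nat.dvd_div_iff_mul_dvd hep
        rw [mul_comm] at h2
        by_cases hcase : d ∣ p / e
        · rw [if_pos hcase, if_pos (h1.mpr (h2.mp hcase))]
        · rw [if_neg hcase, if_neg (fun h => hcase (h2.mpr (h1.mp h)))]
    have step4 : (∑ d ∈ p.divisors, (moebius d : ℤ) * (if d ∣ p / e then 1 else 0))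
        = ∑ d ∈ (p / e).divisors, (moebius d : ℤ) := by
      rw [← Nat.divisors_filter_dvd_of_dvd hp.ne' (Nat.div_dvd_of_dvd hep),
        Finset.sum_filter]
      exact Finset.sum_congr rfl fun d _ => by rw [mul_ite, mul_one, mul_zero]
    rw [step1, step2, step3, step4, sum_moebius_divisors]
    have hpe : p / e * e = p := Nat.div_mul_cancel hep
    by_cases h : e = p
    · subst h
      rw [if_pos (Nat.div_self he), if_pos rfl]
    · have : p / e ≠ 1 := fun h1 => h (by rw [h1, one_mul] at hpe; exact hpe)
      rw [if_neg this, if_neg h]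
  · rw [Finset.sum_eq_zero, if_neg (fun h : e = p => hep (h ▸ dvd_refl p))]
    intro d hd
    have : ¬ e ∣ d := fun h => hep (h.trans (Nat.dvd_of_mem_divisors hd))
    simp [this]
/-- Möbius inversion for orbit indicators: the indicator of the `SL(2,ℤ)`-orbit `O_{1/p}`
is the Möbius-weighted alternating sum of the indicators of the torsion subgroups
`L_{1/d}` over the divisors `d` of `p`. -/
theorem orbit_indicator_moebius_inversion (p : ℕ) (hp : 1 ≤ p) (x : Torus) :
    Set.indicator (torusOrbit ![0, 1 / (p : ℝ)]) (fun _ => (1 : ℤ)) x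
      = ∑ d ∈ Nat.divisors p,
          ArithmeticFunction.moebius (p / d) *
            Set.indicator (torsionSet d) (fun _ => (1 : ℤ)) x := by
  have hp0 : 0 < p := hp
  have hO : Set.indicator (torusOrbit ![0, 1 / (p : ℝ)]) (fun _ => (1 : ℤ)) x
      = if addOrderOf x = p then 1 else 0 := by
    by_cases hx : x ∈ torusOrbit ![0, 1 / (p : ℝ)]
    · rw [Set.indicator_of_mem hx, if_pos ((mem_orbit_iff hp0 x).mp hx)]
    · rw [Set.indicator_of_notMem hx,
        if_neg (fun h => hx ((mem_orbit_iff hp0 x).mpr h))]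
  have hsum : ∀ d ∈ p.divisors,
      (ArithmeticFunction.moebius (p / d) : ℤ) *
          Set.indicator (torsionSet d) (fun _ => (1 : ℤ)) x
        = (ArithmeticFunction.moebius (p / d) : ℤ) * (if addOrderOf x ∣ d then 1 else 0) := by
    intro d hd
    have hd0 : 0 < d := Nat.pos_of_mem_divisors hd
    by_cases hxd : x ∈ torsionSet d
    · rw [Set.indicator_of_mem hxd, if_pos ((mem_torsionSet_iff hd0).mp hxd)]
    · rw [Set.indicator_of_notMem hxd,
        if_neg (fun h => hxd ((mem_torsionSet_iff hd0).mpr h))]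
  rw [hO, Finset.sum_congr rfl hsum, moebius_sum_aux p (addOrderOf x) hp0]
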